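/- Let k < l < n and ε > 0, and let F be a family of k-element subsets of [n] with |F| ≥ (1−ε)·C(n−1,k−1). Then the upper shadow G = F^{↑l} satisfies |G| ≥ (1−ε)·C(n−1,l−1). -/

import Mathlib

open Finset
open scoped FinsetFamily

lemma exists_isInitSeg (n r m : ℕ)
    (hm : m ≤ (powersetCard r (univ : Finset (Fin n))).card) :
    ∃ 𝒞 : Finset (Finset (Fin n)), Finset.Colex.IsInitSeg 𝒞 r ∧ 𝒞.card = m := by
  classical
  have hQcard : ((powersetCard r (univ : Finset (Fin n))).image toColex).card
      = (powersetCard r (univ : Finset (Fin n))).card :=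
    card_image_of_injective _ toColex.injective
  obtain ⟨N, hN⟩ : ∃ N, (powersetCard r (univ : Finset (Fin n))).card = N := ⟨_, rfl⟩
  rw [hN] at hQcard hm
  set Q := (powersetCard r (univ : Finset (Fin n))).image toColex with hQdef
  let e : Fin N ≃o Q := Q.orderIsoOfFin hQcard
  have hlt : ∀ x ∈ Finset.range m, x < N := fun x hx => lt_of_lt_of_le (mem_range.mp hx) hm
  let f : Fin N → Finset (Fin n) := fun i => ofColex ((e i : Q) : Colex (Finset (Fin n)))
  have hfinj : Function.Injective f :=
    fun i j h => e.injective (Subtype.ext (ofColex_inj.mp h))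
  have hfP : ∀ i, f i ∈ powersetCard r (univ : Finset (Fin n)) := by
    intro i
    have h1 : (e i : Colex (Finset (Fin n))) ∈ Q := (e i).2
    rw [mem_image] at h1
    obtain ⟨B, hB, hBe⟩ := h1
    have hfi : f i = B := by
      show ofColex ((e i : Q) : Colex (Finset (Fin n))) = B
      rw [← hBe]; rfl
    exact hfi ▸ hB
  refine ⟨(Finset.attachFin (Finset.range m) hlt).image f, ⟨?_, ?_⟩, ?_⟩
  · intro A hA
    simp only [coe_image, Set.mem_image, mem_coe] at hA
    obtain ⟨i, _, rfl⟩ := hA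
    exact (mem_powersetCard.mp (hfP i)).2
  · rintro s t hs ⟨hts, htr⟩
    rw [mem_image] at hs
    obtain ⟨i, hi, rfl⟩ := hs
    have htQ : toColex t ∈ Q := by
      rw [mem_image]
      exact ⟨t, mem_powersetCard.mpr ⟨subset_univ _, htr⟩, rfl⟩
    have hej : ((e (e.symm ⟨toColex t, htQ⟩) : Q) : Colex (Finset (Fin n)))
        = toColex t := by simp
    have hji : e.symm ⟨toColex t, htQ⟩ < i := by
      rw [← e.lt_iff_lt, ← Subtype.coe_lt_coe, hej]
      have h2 : (e i : Colex (Finset (Fin n))) = toColex (f i) := rfl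
      rw [h2]
      exact hts
    rw [mem_image]
    refine ⟨e.symm ⟨toColex t, htQ⟩, ?_, ?_⟩
    · rw [Finset.mem_attachFin, mem_range] at hi ⊢
      exact lt_trans hji hi
    · show ofColex ((e (e.symm ⟨toColex t, htQ⟩) : Q)
        : Colex (Finset (Fin n))) = t
      rw [hej]; rfl
  · rw [card_image_of_injective _ hfinj, Finset.card_attachFin, card_range]


lemma initSeg_avoid_last {n' r : ℕ} {𝒞 : Finset (Finset (Fin (n' + 1)))}
    (h : Finset.Colex.IsInitSeg 𝒞 r) (hcard : 𝒞.card ≤ n'.choose r) :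
    ∀ A ∈ 𝒞, Fin.last n' ∉ A := by
  classical
  by_contra hcon
  push_neg at hcon
  obtain ⟨A, hA, hlast⟩ := hcon
  set D := powersetCard r ((univ : Finset (Fin (n' + 1))).erase (Fin.last n')) with hD
  have hDcard : D.card = n'.choose r := by
    rw [hD, card_powersetCard, card_erase_of_mem (mem_univ _), card_univ, Fintype.card_fin]
    simp
  have hDsub : D ⊆ 𝒞 := by
    intro B hB
    rw [mem_powersetCard] at hB
    have hlB : Fin.last n' ∉ B := fun hc => (mem_erase.mp (hB.1 hc)).1 rfl
    refine h.2 hA ⟨?_, hB.2⟩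
    rw [Finset.Colex.toColex_lt_toColex]
    constructor
    · rintro rfl; exact hlB hlast
    · intro a ha _
      exact ⟨Fin.last n', hlast, hlB, Fin.le_last a⟩
  have hAD : A ∉ D := by
    intro hc
    rw [mem_powersetCard] at hc
    exact (mem_erase.mp (hc.1 hlast)).1 rfl
  have : n'.choose r + 1 ≤ 𝒞.card := by
    have h1 : insert A D ⊆ 𝒞 := insert_subset hA hDsub
    have := card_le_card h1
    rwa [card_insert_of_notMem hAD, hDcard] at this
  omega

lemma shadow_double_count {n r : ℕ} (a : Fin n) {𝒞 : Finset (Finset (Fin n))}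
    (h𝒞 : (𝒞 : Set (Finset (Fin n))).Sized (r + 1))
    (ha : ∀ A ∈ 𝒞, a ∉ A) :
    𝒞.card * (r + 1) ≤ (∂ 𝒞).card * (n - (r + 1)) := by
  classical
  apply card_mul_le_card_mul (fun A B => B ⊆ A)
  · intro A hA
    have h1 : A.image A.erase ⊆ (∂ 𝒞).bipartiteAbove (fun A B => B ⊆ A) A := by
      intro B hB
      rw [mem_image] at hB
      obtain ⟨x, hx, rfl⟩ := hB
      rw [Finset.mem_bipartiteAbove]
      exact ⟨mem_shadow_iff.mpr ⟨A, hA, x, hx, rfl⟩, erase_subset _ _⟩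
    have h2 : (A.image A.erase).card = r + 1 := by
      rw [card_image_of_injOn (erase_injOn A), h𝒞 hA]
    rw [← h2]
    exact card_le_card h1
  · intro B hB
    have hBcard : B.card = r := by
      have := h𝒞.shadow hB
      simpa using this
    have haB : a ∉ B := by
      rw [mem_shadow_iff] at hB
      obtain ⟨A, hA, x, hx, rfl⟩ := hB
      exact fun hc => ha A hA (mem_of_mem_erase hc)
    have h1 : 𝒞.bipartiteBelow (fun A B => B ⊆ A) B ⊆ (Bᶜ.erase a).image (fun x => insert x B) := by
      intro A hA'
      rw [Finset.mem_bipartiteBelow] at hA'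
      obtain ⟨hA, hBA⟩ := hA'
      have hsd : (A \ B).card = 1 := by
        rw [card_sdiff_of_subset hBA, h𝒞 hA, hBcard]; omega
      obtain ⟨x, hx⟩ := card_eq_one.mp hsd
      have hxA : x ∈ A := (mem_sdiff.mp (hx ▸ mem_singleton_self x)).1
      have hxB : x ∉ B := (mem_sdiff.mp (hx ▸ mem_singleton_self x)).2
      have hAx : A = insert x B := by
        have := union_sdiff_of_subset hBA
        rw [hx] at this
        rw [← this, union_comm, insert_eq]
      rw [mem_image]
      refine ⟨x, ?_, hAx.symm⟩
      rw [mem_erase, mem_compl]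
      exact ⟨fun hc => ha A hA (hc ▸ hxA), hxB⟩
    calc (𝒞.bipartiteBelow (fun A B => B ⊆ A) B).card
        ≤ ((Bᶜ.erase a).image (fun x => insert x B)).card := card_le_card h1
      _ ≤ (Bᶜ.erase a).card := card_image_le
      _ = n - (r + 1) := by
          rw [card_erase_of_mem (mem_compl.mpr haB), card_compl, Fintype.card_fin, hBcard]
          omega


lemma shadow_eq_shadow {α : Type*} (i1 i2 : DecidableEq α) (𝒜 : Finset (Finset α)) :
    @Finset.shadow α i1 𝒜 = @Finset.shadow α i2 𝒜 := by
  have : i1 = i2 := by funext a b; exact Subsingleton.elim _ _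
  rw [this]

lemma shadow_step {n r : ℕ} (hr : 1 ≤ r) (hrn : r < n) {𝒜 : Finset (Finset (Fin n))}
    (h𝒜 : (𝒜 : Set (Finset (Fin n))).Sized r) {c : ℝ} (hc : c ≤ 1)
    (h : c * ((n - 1).choose r : ℝ) ≤ (𝒜.card : ℝ)) :
    c * ((n - 1).choose (r - 1) : ℝ) ≤ (((∂ 𝒜).card : ℕ) : ℝ) := by
  classical
  rcases le_or_gt ((n - 1).choose r) 𝒜.card with hbig | hsmall
  · have hlov := kruskal_katona_lovasz_form (i := 1) hr (by omega : r ≤ n - 1)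
      (by omega : n - 1 ≤ n) h𝒜 hbig
    rw [Function.iterate_one] at hlov
    calc c * ((n - 1).choose (r - 1) : ℝ) ≤ 1 * ((n - 1).choose (r - 1) : ℝ) := by
          apply mul_le_mul_of_nonneg_right hc (by positivity)
      _ = ((n - 1).choose (r - 1) : ℝ) := one_mul _
      _ ≤ (((∂ 𝒜).card : ℕ) : ℝ) := by
          have hlov' : ((n - 1).choose (r - 1)) ≤ (∂ 𝒜).card := by
            rw [shadow_eq_shadow (instDecidableEqFin n) _]
            exact hlov
          exact_mod_cast hlov'
  · obtain ⟨n', rfl⟩ : ∃ n', n = n' + 1 := ⟨n - 1, by omega⟩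
    obtain ⟨r', rfl⟩ : ∃ r', r = r' + 1 := ⟨r - 1, by omega⟩
    simp only [Nat.add_sub_cancel] at h hsmall ⊢
    have h𝒜P : 𝒜 ⊆ powersetCard (r' + 1) (univ : Finset (Fin (n' + 1))) := by
      intro A hA
      exact mem_powersetCard.mpr ⟨subset_univ _, h𝒜 hA⟩
    obtain ⟨𝒞, hinit, hcard𝒞⟩ := exists_isInitSeg (n' + 1) (r' + 1) 𝒜.card
      (card_le_card h𝒜P)
    have hkk0 := kruskal_katona h𝒜 (le_of_eq hcard𝒞) hinit
    have hkk : (∂ 𝒞).card ≤ (∂ 𝒜).card := by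
      refine le_trans (le_of_eq ?_) (le_trans hkk0 (le_of_eq ?_)) <;>
        exact congrArg Finset.card (shadow_eq_shadow _ _ _)
    have havoid : ∀ A ∈ 𝒞, Fin.last n' ∉ A :=
      initSeg_avoid_last hinit (by omega)
    have hcount : 𝒞.card * (r' + 1) ≤ (∂ 𝒞).card * (n' + 1 - (r' + 1)) :=
      shadow_double_count (Fin.last n') hinit.1 havoid
    rw [hcard𝒞] at hcount
    have hid : n'.choose (r' + 1) * (r' + 1) = n'.choose r' * (n' - r') :=
      Nat.choose_succ_right_eq n' r'
    have hkey : 𝒜.card * n'.choose r' ≤ (∂ 𝒞).card * n'.choose (r' + 1) := by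
      apply Nat.le_of_mul_le_mul_right _ (Nat.succ_pos r')
      calc 𝒜.card * n'.choose r' * (r' + 1) = (𝒜.card * (r' + 1)) * n'.choose r' := by ring
        _ ≤ ((∂ 𝒞).card * (n' + 1 - (r' + 1))) * n'.choose r' :=
            Nat.mul_le_mul_right _ hcount
        _ = (∂ 𝒞).card * (n'.choose r' * (n' - r')) := by
            have : n' + 1 - (r' + 1) = n' - r' := by omega
            rw [this]; ring
        _ = (∂ 𝒞).card * (n'.choose (r' + 1) * (r' + 1)) := by rw [← hid]
        _ = (∂ 𝒞).card * n'.choose (r' + 1) * (r' + 1) := by ring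
    have hpos : (0 : ℝ) < (n'.choose (r' + 1) : ℝ) := by
      have : 0 < n'.choose (r' + 1) := lt_of_le_of_lt (Nat.zero_le _) hsmall
      exact_mod_cast this
    have hc' : c ≤ (𝒜.card : ℝ) / (n'.choose (r' + 1) : ℝ) := (le_div_iff₀ hpos).mpr h
    calc c * (n'.choose r' : ℝ)
        ≤ ((𝒜.card : ℝ) / (n'.choose (r' + 1) : ℝ)) * (n'.choose r' : ℝ) :=
          mul_le_mul_of_nonneg_right hc' (by positivity)
      _ ≤ ((∂ 𝒞).card : ℝ) := by
          rw [div_mul_eq_mul_div, div_le_iff₀ hpos]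
          exact_mod_cast hkey
      _ ≤ (((∂ 𝒜).card : ℕ) : ℝ) := by exact_mod_cast hkk

lemma shadow_iter {n : ℕ} (t : ℕ) :
    ∀ r, t ≤ r → r < n → ∀ 𝒜 : Finset (Finset (Fin n)),
      (𝒜 : Set (Finset (Fin n))).Sized r → ∀ c : ℝ, c ≤ 1 →
      c * ((n - 1).choose r : ℝ) ≤ (𝒜.card : ℝ) →
      c * ((n - 1).choose (r - t) : ℝ) ≤ (((∂^[t] 𝒜).card : ℕ) : ℝ) := by
  induction t with
  | zero => intro r _ _ 𝒜 _ c _ h; simpa using h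
  | succ t ih =>
    intro r htr hrn 𝒜 h𝒜 c hc h
    have h1 := shadow_step (by omega : 1 ≤ r) hrn h𝒜 hc h
    have h2 := ih (r - 1) (by omega) (by omega) (∂ 𝒜) h𝒜.shadow c hc h1
    rw [Function.iterate_succ_apply]
    have : r - (t + 1) = r - 1 - t := by omega
    rw [this]
    exact h2


/-- If k < l < n, ε > 0 and |F| ≥ (1−ε)·C(n−1,k−1) for a family F
of k-subsets of [n], then |F^{↑l}| ≥ (1−ε)·C(n−1,l−1). -/
theorem stmt9 {n k l : ℕ} (hkl : k < l) (hln : l < n) (ε : ℝ) (hε : 0 < ε)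
    (F : Finset (Finset (Fin n))) (hF : F ⊆ powersetCard k univ)
    (hcard : (1 - ε) * ((n - 1).choose (k - 1) : ℝ) ≤ (F.card : ℝ)) :
    (1 - ε) * ((n - 1).choose (l - 1) : ℝ) ≤
      (((powersetCard l (univ : Finset (Fin n))).filter
        (fun B => ∃ A ∈ F, A ⊆ B)).card : ℝ) := by
  classical
  have hFmem : ∀ A ∈ F, A.card = k := fun A hA => (mem_powersetCard.mp (hF hA)).2
  rcases Nat.eq_zero_or_pos k with hk | hk
  · -- k = 0
    subst hk
    rcases le_or_gt 1 ε with h1 | h1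
    · have : (1 - ε) * ((n - 1).choose (l - 1) : ℝ) ≤ 0 :=
        mul_nonpos_of_nonpos_of_nonneg (by linarith) (by positivity)
      exact le_trans this (by positivity)
    · -- ε < 1 : F = {∅}, filter is everything
      have hFpos : 0 < F.card := by
        by_contra hc
        push_neg at hc
        interval_cases h : F.card
        · simp only [h, Nat.cast_zero] at hcard
          have : (0:ℝ) < (1 - ε) * ((n - 1).choose (0 - 1) : ℝ) := by
            have : ((n - 1).choose (0 - 1) : ℝ) = 1 := by norm_num
            rw [this]; linarith
          linarith
      obtain ⟨A, hA⟩ := card_pos.mp hFpos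
      have hAe : A = ∅ := card_eq_zero.mp (hFmem A hA)
      have hfilter : (powersetCard l (univ : Finset (Fin n))).filter
          (fun B => ∃ A ∈ F, A ⊆ B) = powersetCard l (univ : Finset (Fin n)) := by
        apply filter_true_of_mem
        intro B _
        exact ⟨A, hA, hAe ▸ empty_subset B⟩
      rw [hfilter, card_powersetCard, card_univ, Fintype.card_fin]
      obtain ⟨n', rfl⟩ : ∃ n', n = n' + 1 := ⟨n - 1, by omega⟩
      obtain ⟨l', rfl⟩ : ∃ l', l = l' + 1 := ⟨l - 1, by omega⟩
      simp only [Nat.add_sub_cancel]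
      have hch : n'.choose l' ≤ (n' + 1).choose (l' + 1) := by
        rw [Nat.choose_succ_succ]
        omega
      calc (1 - ε) * (n'.choose l' : ℝ) ≤ 1 * (n'.choose l' : ℝ) :=
            mul_le_mul_of_nonneg_right (by linarith) (by positivity)
        _ = (n'.choose l' : ℝ) := one_mul _
        _ ≤ ((n' + 1).choose (l' + 1) : ℝ) := by exact_mod_cast hch
  · -- 1 ≤ k
    set 𝒜 := F.image (·ᶜ) with h𝒜def
    have hcompl_inj : Function.Injective (·ᶜ : Finset (Fin n) → Finset (Fin n)) :=
      compl_injective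
    have h𝒜card : 𝒜.card = F.card := card_image_of_injective _ hcompl_inj
    have h𝒜sized : (𝒜 : Set (Finset (Fin n))).Sized (n - k) := by
      intro A hA
      rw [h𝒜def, coe_image, Set.mem_image] at hA
      obtain ⟨B, hB, rfl⟩ := hA
      rw [card_compl, Fintype.card_fin, hFmem B hB]
    have hsymm1 : (n - 1).choose (k - 1) = (n - 1).choose (n - k) := by
      have h1 : (n - 1) - (k - 1) = n - k := by omega
      rw [← Nat.choose_symm (by omega : k - 1 ≤ n - 1), h1]
    have hsymm2 : (n - 1).choose (n - l) = (n - 1).choose (l - 1) := by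
      have h1 : (n - 1) - (n - l) = l - 1 := by omega
      rw [← Nat.choose_symm (by omega : n - l ≤ n - 1), h1]
    have hiter := shadow_iter (l - k) (n - k) (by omega) (by omega) 𝒜 h𝒜sized
      (1 - ε) (by linarith) (by rw [h𝒜card, ← hsymm1]; exact hcard)
    have hrt : (n - k) - (l - k) = n - l := by omega
    rw [hrt, hsymm2] at hiter
    -- identify the iterated shadow with the complement of the filter family
    have hshad : ∂^[l - k] 𝒜 = ((powersetCard l (univ : Finset (Fin n))).filter
        (fun B => ∃ A ∈ F, A ⊆ B)).image (·ᶜ) := by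
      ext C
      rw [mem_shadow_iterate_iff_exists_sdiff, mem_image]
      constructor
      · rintro ⟨S, hS, hCS, hcard'⟩
        rw [h𝒜def, mem_image] at hS
        obtain ⟨A, hA, rfl⟩ := hS
        refine ⟨Cᶜ, ?_, compl_compl C⟩
        rw [mem_filter, mem_powersetCard]
        have hCcard : C.card = n - l := by
          have h1 := card_sdiff_of_subset hCS
          have h2 := card_le_card hCS
          rw [card_compl, Fintype.card_fin, hFmem A hA] at h1 h2
          omega
        refine ⟨⟨subset_univ _, ?_⟩, A, hA, ?_⟩
        · rw [card_compl, Fintype.card_fin, hCcard]; omega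
        · have := compl_subset_compl.mpr hCS
          rwa [compl_compl] at this
      · rintro ⟨B, hB, rfl⟩
        rw [mem_filter, mem_powersetCard] at hB
        obtain ⟨⟨_, hBl⟩, A, hA, hAB⟩ := hB
        refine ⟨Aᶜ, ?_, compl_subset_compl.mpr hAB, ?_⟩
        · rw [h𝒜def, mem_image]; exact ⟨A, hA, rfl⟩
        · rw [compl_sdiff_compl, card_sdiff_of_subset hAB, hBl, hFmem A hA]
    have hcards : (∂^[l - k] 𝒜).card = ((powersetCard l (univ : Finset (Fin n))).filter
        (fun B => ∃ A ∈ F, A ⊆ B)).card := by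
      rw [hshad, card_image_of_injective _ hcompl_inj]
    rw [hcards] at hiter
    exact_mod_cast hiter
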